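/- Let R be a domain of characteristic p > 0, let P ⊂ R be a prime ideal generated by x_1, …, x_s, and let R_1 = { z / x_1^t ∈ R_{x_1} : z ∈ P^t, t ≥ 0 } be the x_1-chart of the blowup along P. If D : R → R is a P-logarithmic differential operator (D(P^k) ⊆ P^k for all k ≥ 0), then the unique extension of D to R_{x_1} maps R_1 into R_1, and moreover D(x_1^k R_1) ⊆ x_1^k R_1 for all k ≥ 0 (i.e., D is x_1 R_1-logarithmic as a differential operator of R_1). -/

import Mathlib

/-- `IsDiffOp R n D` : `D` is an (absolute) differential operator of `R` of order at most `n`,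
defined inductively: order `≤ 0` means `R`-linear, and `D` has order `≤ n+1` if all the
commutators `[D, mulLeft r]` have order `≤ n`.  (For commutative rings this agrees with the
definition via the left `R`-linear extension of `D` to `R ⊗ R` annihilating `T_R^{n+1}`.) -/
def IsDiffOp (R : Type*) [CommRing R] : ℕ → (R →+ R) → Prop
  | 0, D => ∀ r s : R, D (r * s) = r * D s
  | n + 1, D => ∀ r : R,
      IsDiffOp R n ((D.comp (AddMonoidHom.mulLeft r)) - ((AddMonoidHom.mulLeft r).comp D))


section Aux

variable {S : Type*} [CommRing S]

def adOp (f : S) (X : S →+ S) : S →+ S :=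
  X.comp (AddMonoidHom.mulLeft f) - (AddMonoidHom.mulLeft f).comp X

lemma adOp_apply (f : S) (X : S →+ S) (z : S) :
    adOp f X z = X (f * z) - f * X z := rfl

lemma adOp_zero (f : S) : adOp f 0 = 0 := by
  ext z; simp [adOp_apply]

lemma adOp_iterate_eq_zero {d : ℕ} {D : S →+ S} (h : IsDiffOp S d D) (f : S) :
    (adOp f)^[d + 1] D = 0 := by
  induction d generalizing D with
  | zero =>
      show adOp f D = 0
      ext z
      rw [adOp_apply, h f z, sub_self, AddMonoidHom.zero_apply]
  | succ n ih =>
      rw [Function.iterate_succ_apply]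
      exact ih (h f)

lemma adOp_iterate_zero (f : S) (n : ℕ) : (adOp f)^[n] 0 = 0 := by
  induction n with
  | zero => rfl
  | succ n ih => rw [Function.iterate_succ_apply, adOp_zero, ih]

lemma adOp_iterate_eq_zero' {d : ℕ} {D : S →+ S} (h : IsDiffOp S d D) (f : S)
    {m : ℕ} (hm : d < m) : (adOp f)^[m] D = 0 := by
  obtain ⟨n, rfl⟩ := Nat.exists_eq_add_of_le hm
  rw [Nat.add_comm, Function.iterate_add_apply, adOp_iterate_eq_zero h f,
    adOp_iterate_zero]

lemma charP_end (A : Type*) [Ring A] (p : ℕ) [CharP A p] :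
    CharP (AddMonoid.End A) p := by
  constructor
  intro n
  rw [← CharP.cast_eq_zero_iff A p n]
  constructor
  · intro h
    have h1 := congrArg (fun φ : AddMonoid.End A => φ 1) h
    simpa [AddMonoid.End.natCast_apply, nsmul_eq_mul, AddMonoid.End.zero_apply] using h1
  · intro h
    apply AddMonoidHom.ext
    intro a
    change (n : AddMonoid.End A) a = 0
    rw [AddMonoid.End.natCast_apply, nsmul_eq_mul, h, zero_mul]

lemma diffOp_pow_comm (p : ℕ) [Fact p.Prime] [CharP S p]
    {d : ℕ} {D : S →+ S} (h : IsDiffOp S d D) (f : S) {e : ℕ} (he : d < p ^ e) (z : S) :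
    D (f ^ p ^ e * z) = f ^ p ^ e * D z := by
  haveI : CharP (AddMonoid.End S) p := charP_end S p
  haveI : CharP (AddMonoid.End (AddMonoid.End S)) p := charP_end (AddMonoid.End S) p
  let a : AddMonoid.End S := AddMonoidHom.mulLeft f
  let u : AddMonoid.End (AddMonoid.End S) := AddMonoidHom.mulRight a
  let v : AddMonoid.End (AddMonoid.End S) := AddMonoidHom.mulLeft a
  have huv : Commute u v := AddMonoidHom.ext fun X => mul_assoc a X a
  have hcoe : ⇑(u - v) = adOp f := by funext X; rfl
  have hu : ∀ (n : ℕ) (X : AddMonoid.End S), (u ^ n) X = X * a ^ n := by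
    intro n
    induction n with
    | zero => intro X; simp
    | succ n ih =>
        intro X
        rw [pow_succ u n]
        show (u ^ n) (X * a) = X * a ^ (n + 1)
        rw [ih, pow_succ' a n, mul_assoc]
  have hv : ∀ (n : ℕ) (X : AddMonoid.End S), (v ^ n) X = a ^ n * X := by
    intro n
    induction n with
    | zero => intro X; simp
    | succ n ih =>
        intro X
        rw [pow_succ v n]
        show (v ^ n) (a * X) = a ^ (n + 1) * X
        rw [ih, pow_succ a n, mul_assoc]
  have hap : ∀ (n : ℕ) (w : S), (a ^ n) w = f ^ n * w := by
    intro n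
    induction n with
    | zero => intro w; simp
    | succ n ih =>
        intro w
        rw [pow_succ (a : AddMonoid.End S) n]
        show (a ^ n) (f * w) = f ^ (n + 1) * w
        rw [ih]; ring
  have h0 : ((u - v) ^ p ^ e) D = 0 := by
    have : ⇑((u - v) ^ p ^ e) = (adOp f)^[p ^ e] := by
      rw [AddMonoid.End.coe_pow, hcoe]
      rfl
    exact (congrFun this D).trans (adOp_iterate_eq_zero' h f he)
  rw [sub_pow_char_pow_of_commute p e huv] at h0
  have h2 : D ((a ^ p ^ e) z) = (a ^ p ^ e) (D z) := by
    have h1 : ((u ^ p ^ e) D) z = ((v ^ p ^ e) D) z := DFunLike.congr_fun (sub_eq_zero.mp h0) z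
    have h3 := hu (p ^ e) D
    have h4 := hv (p ^ e) D
    exact (DFunLike.congr_fun h3 z).symm.trans (h1.trans (DFunLike.congr_fun h4 z))
  rw [hap, hap] at h2
  exact h2

end Aux

/-- Giraud's lemma for the blowup chart: let `R` be a domain of characteristic `p > 0`,
`P` a prime generated by `x 0, …, x (s-1)`, and let
`R₁ = { z / (x 0)^t : z ∈ P^t }` be the `x 0`-chart of the blowup along `P`, viewed
inside `Localization.Away (x 0)`.  If `D` is a `P`-logarithmic differential operator of
`R` of order at most `d` and `D'` is a differential operator of the localization of order
at most `d` extending `D`, then `D'` preserves each subset `(x 0)^k R₁`; in particular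
(`k = 0`) it maps `R₁` into `R₁`, and it is `x 0 · R₁`-logarithmic. -/
theorem logarithmic_diffOp_preserves_blowup_chart
    (R : Type*) [CommRing R] [IsDomain R] (p : ℕ) [Fact p.Prime] [CharP R p]
    (s : ℕ) (x : Fin (s + 1) → R)
    (P : Ideal R) (hP : P = Ideal.span (Set.range x)) (hPprime : P.IsPrime)
    (d : ℕ) (D : R →+ R) (hD : IsDiffOp R d D)
    (hlog : ∀ k : ℕ, ∀ r ∈ P ^ k, D r ∈ P ^ k)
    (D' : Localization.Away (x 0) →+ Localization.Away (x 0))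
    (hD' : IsDiffOp (Localization.Away (x 0)) d D')
    (hext : ∀ r : R, D' (algebraMap R (Localization.Away (x 0)) r) =
      algebraMap R (Localization.Away (x 0)) (D r)) :
    ∀ k : ℕ, ∀ z : Localization.Away (x 0),
      (∃ t : ℕ, ∃ w ∈ P ^ (k + t),
        z * (algebraMap R (Localization.Away (x 0)) (x 0)) ^ t =
          algebraMap R (Localization.Away (x 0)) w) →
      (∃ t : ℕ, ∃ w ∈ P ^ (k + t),
        D' z * (algebraMap R (Localization.Away (x 0)) (x 0)) ^ t =
          algebraMap R (Localization.Away (x 0)) w) := by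


  intro k z hz
  obtain ⟨t, w, hw, hzw⟩ := hz
  rcases subsingleton_or_nontrivial (Localization.Away (x 0)) with hS | hS
  · exact ⟨0, 0, by simpa using (Ideal.zero_mem (P ^ (k + 0))), Subsingleton.elim _ _⟩
  haveI : CharP (Localization.Away (x 0)) p := by
    have hp0 : ((p : ℕ) : Localization.Away (x 0)) = 0 := by
      rw [← map_natCast (algebraMap R (Localization.Away (x 0))), CharP.cast_eq_zero,
        map_zero]
    have hd : ringChar (Localization.Away (x 0)) ∣ p := ringChar.dvd hp0
    have hprime : p.Prime := Fact.out
    rcases hprime.eq_one_or_self_of_dvd _ hd with h1 | h1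
    · exfalso
      have h2 : ((1 : ℕ) : Localization.Away (x 0)) = 0 :=
        (CharP.cast_eq_zero_iff _ (ringChar (Localization.Away (x 0))) 1).2
          (by rw [h1])
      rw [Nat.cast_one] at h2
      exact one_ne_zero h2
    · exact h1 ▸ ringChar.charP _
  have hprime : p.Prime := Fact.out
  set q := p ^ (d + t) with hq
  have hdtq : d + t < q := by
    calc d + t < 2 ^ (d + t) := Nat.lt_two_pow_self
      _ ≤ p ^ (d + t) := Nat.pow_le_pow_left hprime.two_le _
  have hdq : d < q := lt_of_le_of_lt (Nat.le_add_right d t) hdtq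
  have htq : t ≤ q := le_of_lt (lt_of_le_of_lt (Nat.le_add_left t d) hdtq)
  set f := algebraMap R (Localization.Away (x 0)) (x 0) with hf
  have key : D' (f ^ q * z) = f ^ q * D' z := diffOp_pow_comm p hD' f hdq z
  have hx0P : x 0 ∈ P := hP ▸ Ideal.subset_span ⟨0, rfl⟩
  have hmem : w * (x 0) ^ (q - t) ∈ P ^ (k + q) := by
    have hpe : P ^ (k + q) = P ^ (k + t) * P ^ (q - t) := by
      rw [← pow_add]
      congr 1
      omega
    rw [hpe]
    exact Ideal.mul_mem_mul hw (Ideal.pow_mem_pow hx0P _)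
  have heq : z * f ^ q = algebraMap R (Localization.Away (x 0)) (w * (x 0) ^ (q - t)) := by
    have : f ^ q = f ^ t * f ^ (q - t) := by
      rw [← pow_add]
      congr 1
      omega
    rw [this, ← mul_assoc, hzw, map_mul, map_pow]
  refine ⟨q, D (w * (x 0) ^ (q - t)), hlog _ _ hmem, ?_⟩
  calc D' z * f ^ q = f ^ q * D' z := mul_comm _ _
    _ = D' (f ^ q * z) := key.symm
    _ = D' (z * f ^ q) := by rw [mul_comm]
    _ = D' (algebraMap R (Localization.Away (x 0)) (w * (x 0) ^ (q - t))) := by rw [heq]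
    _ = algebraMap R (Localization.Away (x 0)) (D (w * (x 0) ^ (q - t))) := hext _
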